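/- For all k, n ∈ ℕ one has t_{2^k}(n) ≠ 0. Moreover, defining a : ℕ₊ → ℕ by a(1) = 2, a(2k) = 4·a(k) + 3 and a(2k+1) = 4·a(k) + 6 for k ≥ 1, one has: t_3(n) = 0 if and only if n = a(k) for some k ∈ ℕ₊. -/

import Mathlib

noncomputable def T : PowerSeries ℤ :=
  PowerSeries.mk fun n => (-1) ^ (Nat.digits 2 n).sum

def a : ℕ → ℕ
  | 0 => 0
  | 1 => 2
  | n + 2 =>
      if (n + 2) % 2 = 0 then 4 * a ((n + 2) / 2) + 3 else 4 * a ((n + 2) / 2) + 6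
  decreasing_by all_goals exact Nat.div_lt_self (by omega) (by omega)

open PowerSeries Finset

namespace TM

/-- substitution x ↦ x² -/
noncomputable def sq (f : ℤ⟦X⟧) : ℤ⟦X⟧ :=
  PowerSeries.mk fun n => if 2 ∣ n then PowerSeries.coeff (n/2) f else 0

lemma coeff_sq_even (f : ℤ⟦X⟧) (n : ℕ) : coeff (2*n) (sq f) = coeff n f := by
  simp [sq]
lemma coeff_sq_odd (f : ℤ⟦X⟧) (n : ℕ) : coeff (2*n+1) (sq f) = 0 := by
  simp only [sq, coeff_mk, ite_eq_right_iff]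
  intro h; omega

lemma sum_range_even_odd {M : Type*} [AddCommMonoid M] (g : ℕ → M) (n : ℕ) :
    ∑ i ∈ range (2*n+1), g i = ∑ i ∈ range (n+1), g (2*i) + ∑ i ∈ range n, g (2*i+1) := by
  induction n with
  | zero => simp
  | succ m ih =>
      have h1 : 2*(m+1)+1 = (2*m+1) + 1 + 1 := by ring
      rw [h1, Finset.sum_range_succ, Finset.sum_range_succ, ih,
        Finset.sum_range_succ (fun i => g (2*i)) (m+1), Finset.sum_range_succ (fun i => g (2*i+1)) m]
      have e1 : 2*m+1 = 2*m+1 := rfl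
      have e2 : 2*m+1+1 = 2*(m+1) := by ring
      rw [e2]
      abel

lemma sum_range_even_odd' {M : Type*} [AddCommMonoid M] (g : ℕ → M) (n : ℕ) :
    ∑ i ∈ range (2*n+2), g i = ∑ i ∈ range (n+1), g (2*i) + ∑ i ∈ range (n+1), g (2*i+1) := by
  have : 2*n+2 = (2*n+1)+1 := by ring
  rw [this, Finset.sum_range_succ, sum_range_even_odd,
    Finset.sum_range_succ (fun i => g (2*i+1)) n]
  have : 2*n+1 = 2*n+1 := rfl
  abel

lemma coeff_mul_range (f g : ℤ⟦X⟧) (n : ℕ) :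
    coeff n (f * g) = ∑ i ∈ range (n+1), coeff i f * coeff (n-i) g := by
  rw [coeff_mul, Finset.Nat.sum_antidiagonal_eq_sum_range_succ_mk]

lemma sq_mul (f g : ℤ⟦X⟧) : sq (f * g) = sq f * sq g := by
  ext n
  rcases Nat.even_or_odd n with ⟨m, hm⟩ | ⟨m, hm⟩
  · subst hm
    have h2 : m + m = 2*m := by ring
    rw [h2, coeff_sq_even, coeff_mul_range, coeff_mul_range, sum_range_even_odd
      (fun i => coeff i (sq f) * coeff (2*m - i) (sq g))]
    have hz : ∑ i ∈ range m, coeff (2*i+1) (sq f) * coeff (2*m - (2*i+1)) (sq g) = 0 := by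
      apply Finset.sum_eq_zero; intro i hi
      rw [coeff_sq_odd]; ring
    rw [hz, add_zero]
    apply Finset.sum_congr rfl
    intro i hi
    simp only [Finset.mem_range] at hi
    have h3 : 2*m - 2*i = 2*(m-i) := by omega
    rw [h3, coeff_sq_even, coeff_sq_even]
  · subst hm
    rw [coeff_sq_odd, coeff_mul_range]
    have h2 : 2*m+1+1 = 2*m+2 := by ring
    rw [h2, sum_range_even_odd'
      (fun i => coeff i (sq f) * coeff (2*m+1 - i) (sq g))]
    have hz1 : ∑ i ∈ range (m+1), coeff (2*i) (sq f) * coeff (2*m+1 - 2*i) (sq g) = 0 := by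
      apply Finset.sum_eq_zero; intro i hi
      simp only [Finset.mem_range] at hi
      have h3 : 2*m+1 - 2*i = 2*(m-i)+1 := by omega
      rw [h3, coeff_sq_odd]; ring
    have hz2 : ∑ i ∈ range (m+1), coeff (2*i+1) (sq f) * coeff (2*m+1 - (2*i+1)) (sq g) = 0 := by
      apply Finset.sum_eq_zero; intro i hi
      rw [coeff_sq_odd]; ring
    rw [hz1, hz2]; ring

lemma sq_one : sq 1 = 1 := by
  ext n
  rcases Nat.even_or_odd n with ⟨m, hm⟩ | ⟨m, hm⟩
  · subst hm
    have h2 : m + m = 2*m := by ring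
    rw [h2, coeff_sq_even]
    rcases Nat.eq_zero_or_pos m with h | h
    · subst h; simp
    · rw [coeff_one, coeff_one, if_neg (by omega), if_neg (by omega)]
  · subst hm; rw [coeff_sq_odd, coeff_one, if_neg (by omega)]

lemma sq_pow (f : ℤ⟦X⟧) (m : ℕ) : sq (f ^ m) = (sq f) ^ m := by
  induction m with
  | zero => simpa using sq_one
  | succ j ih => rw [pow_succ, pow_succ, sq_mul, ih]

/-- digit sum abbreviation -/
def s2 (n : ℕ) : ℕ := (Nat.digits 2 n).sum

lemma s2_two_mul (n : ℕ) : s2 (2*n) = s2 n := by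
  rcases Nat.eq_zero_or_pos n with h | h
  · subst h; rfl
  · unfold s2
    rw [Nat.digits_def' (by norm_num : (1:ℕ) < 2) (by omega : 0 < 2*n)]
    simp [Nat.mul_div_cancel_left _ (by norm_num : 0 < 2), Nat.mul_mod_right]

lemma s2_two_mul_add_one (n : ℕ) : s2 (2*n+1) = s2 n + 1 := by
  unfold s2
  rw [Nat.digits_def' (by norm_num : (1:ℕ) < 2) (by omega : 0 < 2*n+1)]
  have h1 : (2*n+1) % 2 = 1 := by omega
  have h2 : (2*n+1) / 2 = n := by omega
  rw [h1, h2]; simp [add_comm]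

lemma coeff_T (n : ℕ) : coeff n T = (-1) ^ s2 n := by simp [T, s2]

lemma T_eq : T = (1 - PowerSeries.X) * sq T := by
  ext n
  have key : coeff n ((1 - PowerSeries.X) * sq T) = coeff n (sq T) - coeff n (PowerSeries.X * sq T) := by
    rw [sub_mul, map_sub, one_mul]
  rcases Nat.eq_zero_or_pos n with h | h
  · subst h
    rw [key]
    simp [coeff_T, sq, s2]
  · rcases Nat.even_or_odd n with ⟨m, hm⟩ | ⟨m, hm⟩
    · have hm' : n = 2*m := by omega
      subst hm'
      have hm2 : 0 < m := by omega
      have h3 : 2*m = (2*(m-1)+1) + 1 := by omega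
      rw [key, coeff_T, coeff_sq_even, coeff_T, h3, PowerSeries.coeff_succ_X_mul, coeff_sq_odd,
        ← h3, s2_two_mul, sub_zero]
    · subst hm
      rw [key, coeff_T, coeff_sq_odd, PowerSeries.coeff_succ_X_mul, coeff_sq_even, coeff_T,
        s2_two_mul_add_one, zero_sub, pow_succ]
      ring

lemma T_pow_eq (m : ℕ) : T ^ m = (1 - PowerSeries.X) ^ m * sq (T ^ m) := by
  conv_lhs => rw [T_eq]
  rw [mul_pow, sq_pow]

lemma coeff_one_sub_X_pow (m j : ℕ) :
    coeff j ((1 - PowerSeries.X) ^ m) = (-1) ^ j * (m.choose j : ℤ) := by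
  induction m generalizing j with
  | zero =>
      rcases Nat.eq_zero_or_pos j with h | h
      · subst h; simp
      · rw [pow_zero, coeff_one, if_neg (by omega), Nat.choose_eq_zero_of_lt (by omega)]
        simp
  | succ m ih =>
      rw [pow_succ, mul_sub, mul_one, map_sub, mul_comm ((1-PowerSeries.X)^m) PowerSeries.X]
      rcases Nat.eq_zero_or_pos j with h | h
      · subst h
        simp [ih]
      · obtain ⟨i, rfl⟩ : ∃ i, j = i + 1 := ⟨j - 1, by omega⟩
        rw [PowerSeries.coeff_succ_X_mul, ih, ih, Nat.choose_succ_succ']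
        push_cast
        ring

lemma coeff_T_pow_zero (m : ℕ) : coeff 0 (T ^ m) = 1 := by
  rw [PowerSeries.coeff_zero_eq_constantCoeff, map_pow]
  have : constantCoeff T = 1 := by
    have h := coeff_T 0
    rw [PowerSeries.coeff_zero_eq_constantCoeff] at h
    rw [h]
    norm_num [s2]
  rw [this, one_pow]

lemma REC_even (m n : ℕ) :
    coeff (2*n) (T ^ m) = ∑ i ∈ range (n+1), (m.choose (2*i) : ℤ) * coeff (n-i) (T ^ m) := by
  conv_lhs => rw [T_pow_eq m]
  rw [coeff_mul_range]
  rw [sum_range_even_odd (fun j => coeff j ((1-PowerSeries.X)^m) * coeff (2*n - j) (sq (T^m)))]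
  have hz : ∑ i ∈ range n, coeff (2*i+1) ((1-PowerSeries.X)^m) * coeff (2*n - (2*i+1)) (sq (T^m)) = 0 := by
    apply Finset.sum_eq_zero; intro i hi
    simp only [Finset.mem_range] at hi
    have h3 : 2*n - (2*i+1) = 2*(n-i-1)+1 := by omega
    rw [h3, coeff_sq_odd]; ring
  rw [hz, add_zero]
  apply Finset.sum_congr rfl
  intro i hi
  simp only [Finset.mem_range] at hi
  have h3 : 2*n - 2*i = 2*(n-i) := by omega
  rw [h3, coeff_sq_even, coeff_one_sub_X_pow]
  have : ((-1:ℤ)) ^ (2*i) = 1 := by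
    rw [pow_mul]; norm_num
  rw [this, one_mul]

lemma REC_odd (m n : ℕ) :
    coeff (2*n+1) (T ^ m) = -∑ i ∈ range (n+1), (m.choose (2*i+1) : ℤ) * coeff (n-i) (T ^ m) := by
  conv_lhs => rw [T_pow_eq m]
  rw [coeff_mul_range]
  have h2 : 2*n+1+1 = 2*n+2 := by ring
  rw [h2, sum_range_even_odd' (fun j => coeff j ((1-PowerSeries.X)^m) * coeff (2*n+1 - j) (sq (T^m)))]
  have hz : ∑ i ∈ range (n+1), coeff (2*i) ((1-PowerSeries.X)^m) * coeff (2*n+1 - 2*i) (sq (T^m)) = 0 := by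
    apply Finset.sum_eq_zero; intro i hi
    simp only [Finset.mem_range] at hi
    have h3 : 2*n+1 - 2*i = 2*(n-i)+1 := by omega
    rw [h3, coeff_sq_odd]; ring
  rw [hz, zero_add, ← Finset.sum_neg_distrib]
  apply Finset.sum_congr rfl
  intro i hi
  simp only [Finset.mem_range] at hi
  have h3 : 2*n+1 - (2*i+1) = 2*(n-i) := by omega
  rw [h3, coeff_sq_even, coeff_one_sub_X_pow, pow_succ]
  have : ((-1:ℤ)) ^ (2*i) = 1 := by rw [pow_mul]; norm_num
  rw [this]
  ring

/-! ### The cube -/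

noncomputable def d (n : ℕ) : ℤ := coeff n (T ^ 3)

lemma sum_trunc2 (f : ℕ → ℤ) (n : ℕ) (hn : 1 ≤ n) (hv : ∀ i, 2 ≤ i → f i = 0) :
    ∑ i ∈ range (n+1), f i = f 0 + f 1 := by
  have hsub : range 2 ⊆ range (n+1) := by
    intro x hx; simp only [Finset.mem_range] at *; omega
  rw [← Finset.sum_subset hsub (fun x _ hx => hv x (by simp at hx; omega))]
  simp [Finset.sum_range_succ]

lemma d_zero : d 0 = 1 := coeff_T_pow_zero 3

lemma d_one : d 1 = -3 := by
  unfold d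
  rw [show (1:ℕ) = 2*0+1 by ring, REC_odd 3 0]
  norm_num [Finset.sum_range_one, coeff_T_pow_zero]

lemma dE (n : ℕ) (hn : 1 ≤ n) : d (2*n) = d n + 3 * d (n-1) := by
  unfold d
  rw [REC_even 3 n, sum_trunc2 _ n hn]
  · norm_num
  · intro i hi
    rw [Nat.choose_eq_zero_of_lt (by omega)]
    norm_num

lemma dO (n : ℕ) (hn : 1 ≤ n) : d (2*n+1) = -(3 * d n + d (n-1)) := by
  unfold d
  rw [REC_odd 3 n, sum_trunc2 _ n hn]
  · norm_num
  · intro i hi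
    rw [Nat.choose_eq_zero_of_lt (by omega)]
    norm_num

lemma d_two : d 2 = 0 := by
  rw [show (2:ℕ) = 2*1 by rfl, dE 1 le_rfl, d_one, d_zero]; norm_num

lemma d_three : d 3 = 8 := by
  rw [show (3:ℕ) = 2*1+1 by rfl, dO 1 le_rfl, d_one, d_zero]; norm_num

lemma dA (m : ℕ) (hm : 1 ≤ m) : d (4*m+2) = 8 * d (m-1) := by
  have h1 : 4*m+2 = 2*(2*m+1) := by ring
  rw [h1, dE (2*m+1) (by omega), show 2*m+1-1 = 2*m by omega, dO m hm, dE m hm]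
  ring

lemma dB (m : ℕ) : d (4*m+3) = 8 * d m := by
  rcases Nat.eq_zero_or_pos m with h | h
  · subst h; simpa [d_zero] using d_three
  · have h1 : 4*m+3 = 2*(2*m+1)+1 := by ring
    rw [h1, dO (2*m+1) (by omega), show 2*m+1-1 = 2*m by omega, dO m h, dE m h]
    ring

lemma d_parity : ∀ n : ℕ, (d n) % 2 = if n % 4 ≤ 1 then 1 else 0 := by
  intro n
  induction n using Nat.strong_induction_on with
  | _ n ih =>
    match n, ih with
    | 0, _ => simp [d_zero]
    | 1, _ => simp [d_one]
    | 2, _ => simp [d_two]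
    | 3, _ => simp [d_three]
    | (n+4), ih =>
      rcases Nat.even_or_odd (n+4) with ⟨m, hm⟩ | ⟨m, hm⟩
      · have hm' : n+4 = 2*m := by omega
        have h1 : 1 ≤ m := by omega
        have h2 := ih m (by omega)
        have h3 := ih (m-1) (by omega)
        rw [hm', dE m h1]
        have h4 : (m-1) % 4 = (m+3) % 4 := by omega
        rw [h4] at h3
        omega
      · have hm' : n+4 = 2*m+1 := by omega
        have h1 : 1 ≤ m := by omega
        have h2 := ih m (by omega)
        have h3 := ih (m-1) (by omega)
        rw [hm', dO m h1]
        have h4 : (m-1) % 4 = (m+3) % 4 := by omega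
        rw [h4] at h3
        omega

lemma d_ne_zero_of_mod (n : ℕ) (h : n % 4 ≤ 1) : d n ≠ 0 := by
  have := d_parity n
  rw [if_pos h] at this
  intro h0; rw [h0] at this; norm_num at this

/- a lemmas -/
lemma a_one : a 1 = 2 := by simp [a]

lemma a_even (j : ℕ) (hj : 1 ≤ j) : a (2*j) = 4 * a j + 3 := by
  have h1 : 2*j = (2*j-2)+2 := by omega
  rw [h1, a]
  rw [if_pos (by omega)]
  have h2 : (2*j-2+2)/2 = j := by omega
  rw [h2]

lemma a_odd (j : ℕ) (hj : 1 ≤ j) : a (2*j+1) = 4 * a j + 6 := by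
  have h1 : 2*j+1 = (2*j-1)+2 := by omega
  rw [h1, a]
  rw [if_neg (by omega)]
  have h2 : (2*j-1+2)/2 = j := by omega
  rw [h2]

lemma d_a_eq_zero : ∀ k : ℕ, 1 ≤ k → d (a k) = 0 := by
  intro k
  induction k using Nat.strong_induction_on with
  | _ k ih =>
    intro hk
    match k, ih with
    | 1, _ => rw [a_one, d_two]
    | (k+2), ih =>
      rcases Nat.even_or_odd (k+2) with ⟨j, hj⟩ | ⟨j, hj⟩
      · have hj' : k+2 = 2*j := by omega
        have h1 : 1 ≤ j := by omega
        rw [hj', a_even j h1, dB (a j), ih j (by omega) h1, mul_zero]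
      · have hj' : k+2 = 2*j+1 := by omega
        have h1 : 1 ≤ j := by omega
        rw [hj', a_odd j h1, show 4 * a j + 6 = 4*(a j + 1)+2 by ring,
          dA (a j + 1) (by omega), Nat.add_sub_cancel, ih j (by omega) h1, mul_zero]

lemma d_zero_iff (n : ℕ) : d n = 0 ↔ ∃ k : ℕ, 1 ≤ k ∧ a k = n := by
  constructor
  · intro h0
    induction n using Nat.strong_induction_on with
    | _ n ih =>
      have hmod : ¬ (n % 4 ≤ 1) := fun h => d_ne_zero_of_mod n h h0
      rcases (by omega : n % 4 = 2 ∨ n % 4 = 3) with h | h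
      · obtain ⟨m, hm⟩ : ∃ m, n = 4*m+2 := ⟨n/4, by omega⟩
        rcases Nat.eq_zero_or_pos m with h1 | h1
        · exact ⟨1, le_rfl, by rw [a_one]; omega⟩
        · subst hm
          rw [dA m h1] at h0
          have h2 : d (m-1) = 0 := by
            rcases mul_eq_zero.mp h0 with h | h
            · norm_num at h
            · exact h
          obtain ⟨j, hj1, hj2⟩ := ih (m-1) (by omega) h2
          exact ⟨2*j+1, by omega, by rw [a_odd j hj1, hj2]; omega⟩
      · obtain ⟨m, hm⟩ : ∃ m, n = 4*m+3 := ⟨n/4, by omega⟩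
        subst hm
        rw [dB m] at h0
        have h2 : d m = 0 := by
          rcases mul_eq_zero.mp h0 with h | h
          · norm_num at h
          · exact h
        obtain ⟨j, hj1, hj2⟩ := ih m (by omega) h2
        exact ⟨2*j, by omega, by rw [a_even j hj1, hj2]⟩
  · rintro ⟨k, hk, rfl⟩
    exact d_a_eq_zero k hk

/-! ### 2-adic valuation helpers -/

local notation "pv" => padicValNat 2

lemma pv_eq {m e : ℕ} (hm : m ≠ 0) (h1 : 2^e ∣ m) (h2 : ¬ 2^(e+1) ∣ m) : pv m = e := by
  have hle : e ≤ pv m := (padicValNat_dvd_iff_le hm).mp h1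
  have hge : pv m ≤ e := by
    by_contra h
    exact h2 ((padicValNat_dvd_iff_le hm).mpr (by omega))
  omega

lemma pv_dvd (m : ℕ) : 2^(pv m) ∣ m := pow_padicValNat_dvd

lemma pv_not_dvd {m : ℕ} (hm : m ≠ 0) : ¬ 2^(pv m + 1) ∣ m := by
  intro h
  have := (padicValNat_dvd_iff_le hm).mp h
  omega

lemma pv_oddpart {m : ℕ} (hm : m ≠ 0) : ∃ u, u % 2 = 1 ∧ m = 2^(pv m) * u := by
  obtain ⟨u, hu⟩ := pv_dvd m
  refine ⟨u, ?_, hu⟩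
  rcases Nat.even_or_odd u with ⟨c, hc⟩ | hodd
  · exfalso
    apply pv_not_dvd hm
    refine ⟨c, ?_⟩
    rw [pow_succ]
    calc m = 2^(pv m) * u := hu
    _ = 2^(pv m) * 2 * c := by rw [hc]; ring
  · exact Nat.odd_iff.mp hodd

lemma pv_lt {k x : ℕ} (hx : 0 < x) (hxK : x < 2^k) : pv x < k := by
  have h1 : 2^(pv x) ≤ x := Nat.le_of_dvd hx (pv_dvd x)
  have := Nat.lt_of_le_of_lt h1 hxK
  exact (Nat.pow_lt_pow_iff_right (by norm_num)).mp this

lemma pv_odd {m : ℕ} (hm : m % 2 = 1) : pv m = 0 :=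
  padicValNat.eq_zero_of_not_dvd (by omega)

lemma pv_pow_mul_odd (j m : ℕ) (hm : m % 2 = 1) : pv (2^j * m) = j := by
  have hp : (0:ℕ) < 2^j := Nat.pow_pos (by norm_num)
  apply pv_eq (Nat.mul_ne_zero (by omega) (by omega))
  · exact Dvd.dvd.mul_right dvd_rfl m
  · rintro ⟨c, hc⟩
    have h2 : 2^j * m = 2^j * (2 * c) := by rw [hc]; ring
    have := Nat.eq_of_mul_eq_mul_left hp h2
    omega

lemma pv_two_pow (j : ℕ) : pv (2^j) = j := by
  have := pv_pow_mul_odd j 1 (by norm_num)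
  simpa using this

lemma pv_mul_pow_add {k q ρ : ℕ} (h1 : 0 < ρ) (h2 : ρ < 2^k) : pv (2^k * q + ρ) = pv ρ := by
  have hpl : pv ρ < k := pv_lt h1 h2
  apply pv_eq (by omega)
  · exact Nat.dvd_add (Dvd.dvd.mul_right (pow_dvd_pow 2 (by omega)) q) (pv_dvd ρ)
  · intro h
    have hd : 2^(pv ρ + 1) ∣ 2^k * q := Dvd.dvd.mul_right (pow_dvd_pow 2 (by omega)) q
    have := Nat.dvd_sub h hd
    rw [Nat.add_sub_cancel_left] at this
    exact pv_not_dvd (by omega) this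

lemma pv_pow_sub {k i : ℕ} (h1 : 0 < i) (h2 : i < 2^k) : pv (2^k - i) = pv i := by
  have hpl : pv i < k := pv_lt h1 h2
  apply pv_eq (by omega)
  · exact (Nat.dvd_sub (pow_dvd_pow 2 (by omega)) (pv_dvd i))
  · intro h
    have hd : (2:ℕ)^(pv i + 1) ∣ 2^k := pow_dvd_pow 2 (by omega)
    have : 2^(pv i + 1) ∣ i := by
      have := Nat.dvd_sub hd h
      rwa [Nat.sub_sub_self (by omega)] at this
    exact pv_not_dvd (by omega) this

lemma pv_ne_pow {k x : ℕ} (hk : 1 ≤ k) (hx : 0 < x) (hxK : x < 2^k) (hne : x ≠ 2^(k-1)) :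
    pv x + 2 ≤ k := by
  have h1 : pv x < k := pv_lt hx hxK
  by_contra h
  have h2 : pv x = k - 1 := by omega
  obtain ⟨c, hc⟩ := pv_dvd x
  rw [h2] at hc
  have hK : (2:ℕ)^k = 2^(k-1) * 2 := by
    rw [← pow_succ]
    congr 1
    omega
  have hcpos : 1 ≤ c := by
    rcases Nat.eq_zero_or_pos c with h3 | h3
    · subst h3
      simp at hc
      omega
    · exact h3
  have hc2 : c = 1 := by
    by_contra h3
    have h4 : 2 ≤ c := by omega
    have h5 : 2^k ≤ x := by
      rw [hK, hc]
      exact Nat.mul_le_mul_left _ h4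
    omega
  rw [hc2, mul_one] at hc
  exact hne hc

lemma pv_add_lt {x y : ℕ} (hx : 0 < x) (h : pv x < pv y) : pv (x + y) = pv x := by
  have hy : y ≠ 0 := by
    intro h0
    rw [h0] at h
    simp [padicValNat.zero] at h
  apply pv_eq (by omega)
  · exact Nat.dvd_add (pv_dvd x) (dvd_trans (pow_dvd_pow 2 (by omega)) (pv_dvd y))
  · intro hd
    have hdy : 2^(pv x + 1) ∣ y := dvd_trans (pow_dvd_pow 2 (by omega)) (pv_dvd y)
    have : 2^(pv x+1) ∣ x := by
      have := Nat.dvd_sub hd hdy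
      rwa [Nat.add_sub_cancel] at this
    exact pv_not_dvd (by omega) this

lemma pv_add_eq {x y : ℕ} (hx : 0 < x) (hy : 0 < y) (h : pv x = pv y) :
    pv x + 1 ≤ pv (x + y) := by
  have hxy : x + y ≠ 0 := by omega
  rw [← padicValNat_dvd_iff_le hxy]
  obtain ⟨u, hu1, hu2⟩ := pv_oddpart (show x ≠ 0 by omega)
  obtain ⟨v, hv1, hv2⟩ := pv_oddpart (show y ≠ 0 by omega)
  rw [← h] at hv2
  obtain ⟨w, hw⟩ : ∃ w, u + v = 2*w := ⟨(u+v)/2, by omega⟩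
  set e := pv x with he
  refine ⟨w, ?_⟩
  rw [hu2, hv2, pow_succ, show 2^e*u + 2^e*v = 2^e*(u+v) by ring, hw]
  ring

lemma tri1 {B x y : ℕ} (hx : 0 < x) (hy : 0 < y) (h1 : pv x ≤ B) (h2 : pv y ≤ B) :
    pv x + pv y ≤ B + pv (x + y) := by
  rcases lt_trichotomy (pv x) (pv y) with h | h | h
  · rw [pv_add_lt hx h]; omega
  · have := pv_add_eq hx hy h; omega
  · rw [add_comm x y, pv_add_lt hy h]; omega

lemma tri2 {B x y : ℕ} (hx : 0 < x) (hy : 0 < y) (h1 : pv x ≤ B) (h2 : pv y ≤ B)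
    (h3 : pv (x+y) ≤ B) : pv (x + y) + pv y ≤ B + pv x := by
  rcases lt_trichotomy (pv x) (pv y) with h | h | h
  · rw [pv_add_lt hx h]; omega
  · omega
  · rw [add_comm x y, pv_add_lt hy h]; omega

/-! ### Good : exact 2-adic valuation -/

def Good (e : ℕ) (x : ℤ) : Prop := ∃ u : ℤ, Odd u ∧ x = 2^e * u

lemma Good.ne_zero {e : ℕ} {x : ℤ} (h : Good e x) : x ≠ 0 := by
  obtain ⟨u, hu, rfl⟩ := h
  intro h0
  rcases mul_eq_zero.mp h0 with h | h
  · exact absurd h (by positivity)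
  · subst h; exact (Int.not_odd_iff_even.mpr Even.zero) hu

lemma Good.dvd {e : ℕ} {x : ℤ} (h : Good e x) : (2:ℤ)^e ∣ x := by
  obtain ⟨u, hu, rfl⟩ := h; exact Dvd.intro u rfl

lemma Good.neg {e : ℕ} {x : ℤ} (h : Good e x) : Good e (-x) := by
  obtain ⟨u, hu, rfl⟩ := h
  exact ⟨-u, hu.neg, by ring⟩

lemma Good.mul {e f : ℕ} {x y : ℤ} (hx : Good e x) (hy : Good f y) : Good (e+f) (x*y) := by
  obtain ⟨u, hu, rfl⟩ := hx
  obtain ⟨v, hv, rfl⟩ := hy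
  exact ⟨u*v, hu.mul hv, by rw [pow_add]; ring⟩

lemma Good.add_dvd {e : ℕ} {x y : ℤ} (hx : Good e x) (hy : (2:ℤ)^(e+1) ∣ y) :
    Good e (x + y) := by
  obtain ⟨u, hu, rfl⟩ := hx
  obtain ⟨c, rfl⟩ := hy
  exact ⟨u + 2*c, by
    obtain ⟨j, hj⟩ := hu
    exact ⟨j + c, by rw [hj]; ring⟩, by rw [pow_succ]; ring⟩

lemma Good.add3_dvd {e : ℕ} {x y z w : ℤ} (hx : Good e x) (hy : Good e y) (hz : Good e z)
    (hw : (2:ℤ)^(e+1) ∣ w) : Good e (x + (y + (z + w))) := by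
  obtain ⟨u, hu, rfl⟩ := hx
  obtain ⟨v, hv, rfl⟩ := hy
  obtain ⟨t, ht, rfl⟩ := hz
  obtain ⟨c, rfl⟩ := hw
  refine ⟨u + v + t + 2*c, ?_, by rw [pow_succ]; ring⟩
  obtain ⟨j1, hj1⟩ := hu
  obtain ⟨j2, hj2⟩ := hv
  obtain ⟨j3, hj3⟩ := ht
  exact ⟨j1 + j2 + j3 + c + 1, by rw [hj1, hj2, hj3]; ring⟩

lemma good_one : Good 0 (1:ℤ) := ⟨1, odd_one, by norm_num⟩

lemma good_sum_single {f : ℕ → ℤ} {e : ℕ} {s : Finset ℕ} {i₀ : ℕ} (h₀ : i₀ ∈ s)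
    (hg : Good e (f i₀)) (hrest : ∀ i ∈ s, i ≠ i₀ → (2:ℤ)^(e+1) ∣ f i) :
    Good e (∑ i ∈ s, f i) := by
  rw [← Finset.add_sum_erase s f h₀]
  exact hg.add_dvd (Finset.dvd_sum fun i hi =>
    hrest i (Finset.mem_of_mem_erase hi) (Finset.ne_of_mem_erase hi))

lemma good_sum_triple {f : ℕ → ℤ} {e : ℕ} {s : Finset ℕ} {i₀ i₁ i₂ : ℕ}
    (h01 : i₀ ≠ i₁) (h02 : i₀ ≠ i₂) (h12 : i₁ ≠ i₂)
    (m0 : i₀ ∈ s) (m1 : i₁ ∈ s) (m2 : i₂ ∈ s)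
    (hg0 : Good e (f i₀)) (hg1 : Good e (f i₁)) (hg2 : Good e (f i₂))
    (hrest : ∀ i ∈ s, i ≠ i₀ → i ≠ i₁ → i ≠ i₂ → (2:ℤ)^(e+1) ∣ f i) :
    Good e (∑ i ∈ s, f i) := by
  rw [← Finset.add_sum_erase s f m0,
    ← Finset.add_sum_erase _ f (Finset.mem_erase.mpr ⟨h01.symm, m1⟩),
    ← Finset.add_sum_erase _ f (Finset.mem_erase.mpr ⟨h12.symm, Finset.mem_erase.mpr ⟨h02.symm, m2⟩⟩)]
  refine hg0.add3_dvd hg1 hg2 (Finset.dvd_sum fun i hi => ?_)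
  simp only [Finset.mem_erase] at hi
  exact hrest i hi.2.2.2 hi.2.2.1 hi.2.1 hi.1

/-! ### binomial coefficients of `2^k` -/

lemma choose_pred_odd {k i : ℕ} (hi : i < 2^k) : (2^k - 1).choose i % 2 = 1 := by
  have h1 : ((1:Polynomial (ZMod 2)) + Polynomial.X)^(2^k) = 1 + Polynomial.X^(2^k) := by
    have := add_pow_char_pow (R := Polynomial (ZMod 2)) 1 Polynomial.X 2 k
    simpa using this
  have hgeom : (∑ j ∈ range (2^k), (Polynomial.X:Polynomial (ZMod 2))^j) * (1 + Polynomial.X)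
      = 1 + Polynomial.X^(2^k) := by
    have hg := geom_sum_mul (Polynomial.X : Polynomial (ZMod 2)) (2^k)
    have hsub : (Polynomial.X : Polynomial (ZMod 2)) - 1 = 1 + Polynomial.X := by
      rw [sub_eq_add_neg, CharTwo.neg_eq]; ring
    have hsub2 : (Polynomial.X : Polynomial (ZMod 2))^(2^k) - 1 = 1 + Polynomial.X^(2^k) := by
      rw [sub_eq_add_neg, CharTwo.neg_eq]; ring
    rw [hsub, hsub2] at hg
    exact hg
  have hKpos : 1 ≤ 2^k := Nat.one_le_two_pow
  have h2 : ((1:Polynomial (ZMod 2)) + Polynomial.X)^(2^k - 1) * (1 + Polynomial.X)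
      = (∑ j ∈ range (2^k), (Polynomial.X:Polynomial (ZMod 2))^j) * (1 + Polynomial.X) := by
    rw [hgeom, ← pow_succ, Nat.sub_add_cancel hKpos, h1]
  have hX1 : (1 + Polynomial.X : Polynomial (ZMod 2)) ≠ 0 := by
    intro h
    have h0 := congrArg (fun p => Polynomial.coeff p 0) h
    simp at h0
  have h3 : ((1:Polynomial (ZMod 2)) + Polynomial.X)^(2^k - 1)
      = ∑ j ∈ range (2^k), (Polynomial.X:Polynomial (ZMod 2))^j :=
    mul_right_cancel₀ hX1 h2
  have h4 := congrArg (fun p => Polynomial.coeff p i) h3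
  simp only [Polynomial.coeff_one_add_X_pow, Polynomial.finset_sum_coeff,
    Polynomial.coeff_X_pow] at h4
  rw [Finset.sum_ite_eq (range (2^k)) i (fun _ => (1:ZMod 2)), if_pos (Finset.mem_range.mpr hi)] at h4
  have h5 : (((2^k - 1).choose i : ℕ) : ZMod 2) = 1 := h4
  rcases Nat.even_or_odd ((2^k - 1).choose i) with he | ho
  · exfalso
    obtain ⟨c, hc⟩ := he
    rw [hc] at h5
    push_cast at h5
    rw [← two_mul, show ((2:ZMod 2)) = 0 from by decide, zero_mul] at h5
    exact one_ne_zero h5.symm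
  · exact Nat.odd_iff.mp ho

lemma good_choose {k j : ℕ} (h1 : 0 < j) (h2 : j ≤ 2^k) :
    Good (k - pv j) (((2^k).choose j : ℤ)) := by
  have hid : 2^k * (2^k - 1).choose (j-1) = (2^k).choose j * j := by
    have := Nat.add_one_mul_choose_eq (2^k - 1) (j-1)
    rw [Nat.sub_add_cancel Nat.one_le_two_pow] at this
    rw [this, show j - 1 + 1 = j from by omega]
  set c := (2^k - 1).choose (j-1) with hc
  have hcodd : c % 2 = 1 := choose_pred_odd (by omega)
  obtain ⟨m, hm1, hm2⟩ := pv_oddpart (show j ≠ 0 by omega)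
  have hpvk : pv j ≤ k := by
    have h3 : 2^(pv j) ≤ j := Nat.le_of_dvd h1 (pv_dvd j)
    have h4 : 2^(pv j) ≤ 2^k := le_trans h3 h2
    exact (Nat.pow_le_pow_iff_right (by norm_num)).mp h4
  set e := pv j with he
  -- 2^k * c = C * 2^e * m  ⇒  2^(k-e) * c = C * m
  have hkey : 2^(k-e) * c = (2^k).choose j * m := by
    have h5 : 2^e * (2^(k-e) * c) = 2^e * ((2^k).choose j * m) := by
      rw [show 2^e * (2^(k-e)*c) = 2^(e + (k-e)) * c from by rw [pow_add]; ring,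
        show e + (k-e) = k from by omega, hid]
      rw [hm2]
      ring
    exact Nat.eq_of_mul_eq_mul_left (Nat.pow_pos (by norm_num)) h5
  -- 2^(k-e) ∣ C since m odd
  have hdvd : 2^(k-e) ∣ (2^k).choose j := by
    have hcop : Nat.Coprime (2^(k-e)) m := by
      apply Nat.Coprime.pow_left
      exact (Nat.prime_two.coprime_iff_not_dvd).mpr (by omega)
    exact hcop.dvd_of_dvd_mul_right ⟨c, hkey.symm⟩
  obtain ⟨u, hu⟩ := hdvd
  have hceq : c = u * m := by
    have h6 : 2^(k-e) * c = 2^(k-e) * (u * m) := by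
      rw [hkey, hu]; ring
    exact Nat.eq_of_mul_eq_mul_left (Nat.pow_pos (by norm_num)) h6
  have huodd : u % 2 = 1 := by
    rcases Nat.even_or_odd u with ⟨t, ht⟩ | ho
    · exfalso
      rw [hceq, ht, show (t+t)*m = 2*(t*m) from by ring] at hcodd
      omega
    · exact Nat.odd_iff.mp ho
  refine ⟨(u:ℤ), ?_, ?_⟩
  · obtain ⟨w, hw⟩ : ∃ w, u = 2*w+1 := ⟨u/2, by omega⟩
    exact ⟨(w:ℤ), by rw [hw]; push_cast; ring⟩
  · rw [hu]
    push_cast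
    ring

/-! ### the valuation function -/

def Vk (k m : ℕ) : ℕ := if 2^k ∣ m then 0 else (k - pv m) + pv (m / 2^k + 1)

lemma Vk_mul (k q : ℕ) : Vk k (2^k * q) = 0 := by
  unfold Vk
  rw [if_pos ⟨q, rfl⟩]

lemma Vk_zero (k : ℕ) : Vk k 0 = 0 := by
  simpa using Vk_mul k 0

lemma Vk_eq (k q ρ : ℕ) (h1 : 0 < ρ) (h2 : ρ < 2^k) :
    Vk k (2^k * q + ρ) = (k - pv ρ) + pv (q+1) := by
  unfold Vk
  rw [if_neg]
  · rw [pv_mul_pow_add h1 h2]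
    congr 2
    rw [Nat.mul_add_div (Nat.pow_pos (by norm_num)), Nat.div_eq_of_lt h2]
  · intro hd
    have : (2:ℕ)^k ∣ ρ := (Nat.dvd_add_right ⟨q, rfl⟩).mp hd
    have := Nat.le_of_dvd h1 this
    omega

lemma pv_double {m : ℕ} (hm : m ≠ 0) : pv (2*m) = pv m + 1 := by
  obtain ⟨w, hw1, hw2⟩ := pv_oddpart hm
  set e := pv m with he
  rw [hw2, show 2*(2^e*w) = 2^(e+1)*w from by ring, pv_pow_mul_odd _ _ hw1]

lemma dvd_t_of_good {E V : ℕ} {t : ℤ} (h : Good E t) (hle : V ≤ E) : (2:ℤ)^V ∣ t :=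
  dvd_trans (pow_dvd_pow 2 hle) h.dvd

lemma dvd_term {e w v : ℕ} {C t : ℤ} (hC : (2:ℤ)^w ∣ C) (ht : (2:ℤ)^v ∣ t)
    (h : e+1 ≤ w + v) : (2:ℤ)^(e+1) ∣ C * t :=
  dvd_trans (pow_dvd_pow 2 h) (by rw [pow_add]; exact mul_dvd_mul hC ht)

section MainInduction

variable {k : ℕ}

lemma odd_step (hk : 1 ≤ k) (n : ℕ)
    (ih : ∀ m, m ≤ n → Good (Vk k m) (coeff m (T^(2^k)))) :
    Good (Vk k (2*n+1)) (coeff (2*n+1) (T^(2^k))) := by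
  have hH1 : 1 ≤ 2^(k-1) := Nat.one_le_two_pow
  have hKH : 2^k = 2*2^(k-1) := by
    rw [← pow_succ']
    congr 1
    omega
  have hHK : 2^(k-1) < 2^k := by omega
  set H := 2^(k-1) with hH
  set K := 2^k with hKdef
  have hu : n % H < H := Nat.mod_lt n (by omega)
  set p := n / H with hp
  set u := n % H with hudef
  have hn : n = H * p + u := (Nat.div_add_mod n H).symm
  rw [REC_odd]
  rcases Nat.even_or_odd p with ⟨q, hq⟩ | ⟨q, hq⟩
  · -- p = 2q : n = K*q + u
    have hA1 : K*q = H*p := by rw [hq, hKH]; ring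
    have hA2 : K*(2*q) = 2*(H*p) := by rw [hq, hKH]; ring
    have hnq : n = K*q + u := by omega
    have hVt : Vk k (2*n+1) = k := by
      have h1 : 2*n+1 = K*(2*q) + (2*u+1) := by omega
      rw [h1, Vk_eq k (2*q) (2*u+1) (by omega) (by omega), pv_odd (by omega : (2*u+1) % 2 = 1),
        pv_odd (by omega : (2*q+1) % 2 = 1)]
      omega
    rw [hVt]
    apply Good.neg
    apply good_sum_single (i₀ := u) (Finset.mem_range.mpr (by omega))
    · -- main term
      have hnu : n - u = K*q := by omega
      have hch : Good k (((2^k).choose (2*u+1) : ℤ)) := by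
        have := good_choose (k := k) (j := 2*u+1) (by omega) (by omega)
        rwa [pv_odd (by omega : (2*u+1) % 2 = 1), Nat.sub_zero] at this
      have ht : Good 0 (coeff (n-u) (T^(2^k))) := by
        rw [hnu]
        have h2 := ih (K*q) (by omega)
        rwa [Vk_mul] at h2
      simpa using hch.mul ht
    · intro i hi hine
      simp only [Finset.mem_range] at hi
      by_cases hiH : H ≤ i
      · rw [Nat.choose_eq_zero_of_lt (by omega)]
        simp
      · have hC : (2:ℤ)^k ∣ ((2^k).choose (2*i+1) : ℤ) := by
          have := good_choose (k := k) (j := 2*i+1) (by omega) (by omega)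
          rw [pv_odd (by omega : (2*i+1) % 2 = 1), Nat.sub_zero] at this
          exact this.dvd
        have ht : (2:ℤ)^1 ∣ coeff (n-i) (T^(2^k)) := by
          rcases Nat.lt_or_ge i u with hlt | hge
          · have h1 : n - i = K*q + (u-i) := by omega
            have h2 : Vk k (n-i) = (k - pv (u-i)) + pv (q+1) := by
              rw [h1, Vk_eq k q (u-i) (by omega) (by omega)]
            have h3 : pv (u-i) < k := pv_lt (by omega) (by omega)
            exact dvd_t_of_good (ih (n-i) (by omega)) (by omega)
          · have hgt : u < i := by omega
            have hq1 : 1 ≤ q := by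
              by_contra hq0
              have hq0' : q = 0 := by omega
              rw [hq0', mul_zero] at hA1
              omega
            obtain ⟨q', rfl⟩ : ∃ q', q = q'+1 := ⟨q-1, by omega⟩
            have hA3 : K*(q'+1) = K*q' + K := by ring
            have h1 : n - i = K*q' + (K - (i-u)) := by omega
            have h2 : Vk k (n-i) = (k - pv (K - (i-u))) + pv (q'+1) := by
              rw [h1, Vk_eq k q' (K - (i-u)) (by omega) (by omega)]
            have h3 : pv (K - (i-u)) < k := pv_lt (by omega) (by omega)
            exact dvd_t_of_good (ih (n-i) (by omega)) (by omega)
        exact dvd_term hC ht (by omega)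
  · -- p = 2q+1 : n = K*q + H + u
    have hB1 : K*q + H = H*p := by rw [hq, hKH]; ring
    have hB2 : K*(2*q+1) = 2*(K*q) + K := by ring
    have hnq : n = K*q + H + u := by omega
    have hpvH : pv H = k - 1 := by rw [hH]; exact pv_two_pow (k-1)
    have hVt : Vk k (2*n+1) = k + (1 + pv (q+1)) := by
      have h1 : 2*n+1 = K*(2*q+1) + (2*u+1) := by omega
      rw [h1, Vk_eq k (2*q+1) (2*u+1) (by omega) (by omega),
        pv_odd (by omega : (2*u+1) % 2 = 1), Nat.sub_zero,
        show 2*q+1+1 = 2*(q+1) from by ring, pv_double (by omega)]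
      omega
    rw [hVt]
    apply Good.neg
    apply good_sum_single (i₀ := u) (Finset.mem_range.mpr (by omega))
    · have hnu : n - u = K*q + H := by omega
      have hch : Good k (((2^k).choose (2*u+1) : ℤ)) := by
        have := good_choose (k := k) (j := 2*u+1) (by omega) (by omega)
        rwa [pv_odd (by omega : (2*u+1) % 2 = 1), Nat.sub_zero] at this
      have ht : Good (1 + pv (q+1)) (coeff (n-u) (T^(2^k))) := by
        rw [hnu]
        have h2 := ih (K*q+H) (by omega)
        rwa [Vk_eq k q H (by omega) (by omega), hpvH, show k - (k-1) = 1 from by omega] at h2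
      exact hch.mul ht
    · intro i hi hine
      simp only [Finset.mem_range] at hi
      by_cases hiH : H ≤ i
      · rw [Nat.choose_eq_zero_of_lt (by omega)]
        simp
      · have hC : (2:ℤ)^k ∣ ((2^k).choose (2*i+1) : ℤ) := by
          have := good_choose (k := k) (j := 2*i+1) (by omega) (by omega)
          rw [pv_odd (by omega : (2*i+1) % 2 = 1), Nat.sub_zero] at this
          exact this.dvd
        have ht : (2:ℤ)^(2 + pv (q+1)) ∣ coeff (n-i) (T^(2^k)) := by
          rcases Nat.lt_or_ge i u with hlt | hge
          · have h1 : n - i = K*q + (H + (u-i)) := by omega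
            have h3 : pv (H + (u-i)) + 2 ≤ k := pv_ne_pow hk (by omega) (by omega) (by omega)
            have h2 : Vk k (n-i) = (k - pv (H + (u-i))) + pv (q+1) := by
              rw [h1, Vk_eq k q (H + (u-i)) (by omega) (by omega)]
            exact dvd_t_of_good (ih (n-i) (by omega)) (by omega)
          · have hgt : u < i := by omega
            have h1 : n - i = K*q + (H - (i-u)) := by omega
            have h3 : pv (H - (i-u)) + 2 ≤ k := pv_ne_pow hk (by omega) (by omega) (by omega)
            have h2 : Vk k (n-i) = (k - pv (H - (i-u))) + pv (q+1) := by
              rw [h1, Vk_eq k q (H - (i-u)) (by omega) (by omega)]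
            exact dvd_t_of_good (ih (n-i) (by omega)) (by omega)
        exact dvd_term hC ht (by omega)

lemma even_step (hk : 1 ≤ k) (n : ℕ) (hn1 : 1 ≤ n)
    (ih : ∀ m, m ≤ n → Good (Vk k m) (coeff m (T^(2^k)))) :
    Good (Vk k (2*n)) (coeff (2*n) (T^(2^k))) := by
  have hH1 : 1 ≤ 2^(k-1) := Nat.one_le_two_pow
  have hKH : 2^k = 2*2^(k-1) := by
    rw [← pow_succ']
    congr 1
    omega
  have hHK : 2^(k-1) < 2^k := by omega
  set H := 2^(k-1) with hH
  set K := 2^k with hKdef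
  obtain ⟨q, r, hr, hn⟩ : ∃ q r, r < K ∧ n = K*q + r :=
    ⟨n / K, n % K, Nat.mod_lt n (by omega), (Nat.div_add_mod n K).symm⟩
  have hpvH : pv H = k - 1 := by rw [hH]; exact pv_two_pow (k-1)
  rw [REC_even]
  rcases Nat.lt_trichotomy r H with hrH | hrH | hrH
  · rcases Nat.eq_zero_or_pos r with hr0 | hr0
    · -- r = 0, q ≥ 1
      have hq1 : 1 ≤ q := by
        by_contra hq0
        have hq0' : q = 0 := by omega
        rw [hq0', mul_zero] at hn
        omega
      obtain ⟨q', rfl⟩ : ∃ q', q = q'+1 := ⟨q-1, by omega⟩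
      have hP1 : K*(q'+1) = K*q' + K := by ring
      have hP2 : 2*n = K*(2*q'+2) := by rw [hn, hr0]; ring
      have hVt : Vk k (2*n) = 0 := by rw [hP2]; exact Vk_mul k _
      rw [hVt]
      apply good_sum_single (i₀ := 0) (Finset.mem_range.mpr (by omega))
      · have h2 := ih n le_rfl
        rw [show Vk k n = 0 from by rw [hn, hr0, add_zero]; exact Vk_mul k _] at h2
        simpa using h2
      · intro i hi hine
        simp only [Finset.mem_range] at hi
        by_cases hiH : H < i
        · rw [Nat.choose_eq_zero_of_lt (by omega)]
          simp
        · have hipos : 0 < i := by omega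
          have hpvi : pv i < k := pv_lt hipos (by omega)
          have hCg := good_choose (k := k) (j := 2*i) (by omega) (by omega)
          rw [pv_double (by omega)] at hCg
          have hpvKi : pv (K - i) = pv i := pv_pow_sub hipos (by omega)
          have h1 : n - i = K*q' + (K - i) := by omega
          have hV : Vk k (n-i) = (k - pv (K - i)) + pv (q'+1) := by
            rw [h1, Vk_eq k q' (K - i) (by omega) (by omega)]
          have ht : (2:ℤ)^(k - pv i) ∣ coeff (n-i) (T^(2^k)) :=
            dvd_t_of_good (ih (n-i) (by omega)) (by omega)
          exact dvd_term hCg.dvd ht (by omega)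
    · -- 0 < r < H
      have hpvr : pv r < k := pv_lt hr0 (by omega)
      have hpv2r : pv (2*r) = pv r + 1 := pv_double (by omega)
      have hP2 : 2*n = K*(2*q) + 2*r := by rw [hn]; ring
      have hVt : Vk k (2*n) = (k - (pv r + 1)) + 0 := by
        rw [hP2, Vk_eq k (2*q) (2*r) (by omega) (by omega), hpv2r,
          pv_odd (by omega : (2*q+1) % 2 = 1)]
      rw [hVt]
      apply good_sum_single (i₀ := r) (Finset.mem_range.mpr (by omega))
      · have hCg := good_choose (k := k) (j := 2*r) (by omega) (by omega)
        rw [hpv2r] at hCg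
        have hnr : n - r = K*q := by omega
        have ht : Good 0 (coeff (n-r) (T^(2^k))) := by
          rw [hnr]
          have h2 := ih (K*q) (by omega)
          rwa [Vk_mul] at h2
        simpa using hCg.mul ht
      · intro i hi hine
        simp only [Finset.mem_range] at hi
        by_cases hiH : H < i
        · rw [Nat.choose_eq_zero_of_lt (by omega)]
          simp
        · rcases Nat.eq_zero_or_pos i with hi0 | hi0
          · subst hi0
            have hV : Vk k (n-0) = (k - pv r) + pv (q+1) := by
              rw [Nat.sub_zero, hn, Vk_eq k q r (by omega) (by omega)]
            have ht : (2:ℤ)^((k - (pv r + 1)) + 0 + 1) ∣ coeff (n-0) (T^(2^k)) :=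
              dvd_t_of_good (ih (n-0) (by omega)) (by omega)
            simpa using ht
          · have hpvi : pv i < k := pv_lt hi0 (by omega)
            have hCg := good_choose (k := k) (j := 2*i) (by omega) (by omega)
            rw [pv_double (by omega)] at hCg
            rcases Nat.lt_or_ge i r with hlt | hge
            · have hri : pv (r-i) < k := pv_lt (by omega) (by omega)
              have htri : pv i + pv (r-i) ≤ (k-1) + pv (i + (r-i)) :=
                tri1 hi0 (by omega) (by omega) (by omega)
              rw [show i + (r-i) = r from by omega] at htri
              have h1 : n - i = K*q + (r-i) := by omega
              have hV : Vk k (n-i) = (k - pv (r-i)) + pv (q+1) := by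
                rw [h1, Vk_eq k q (r-i) (by omega) (by omega)]
              have ht : (2:ℤ)^(k - pv (r-i)) ∣ coeff (n-i) (T^(2^k)) :=
                dvd_t_of_good (ih (n-i) (by omega)) (by omega)
              exact dvd_term hCg.dvd ht (by omega)
            · have hgt : r < i := by omega
              have hq1 : 1 ≤ q := by
                by_contra hq0
                have hq0' : q = 0 := by omega
                rw [hq0', mul_zero] at hn
                omega
              obtain ⟨q', rfl⟩ : ∃ q', q = q'+1 := ⟨q-1, by omega⟩
              have hP1 : K*(q'+1) = K*q' + K := by ring
              have hir : pv (i-r) < k := pv_lt (by omega) (by omega)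
              have hir2 : pv (r + (i-r)) < k := by
                rw [show r + (i-r) = i from by omega]
                exact hpvi
              have htri : pv (r + (i-r)) + pv (i-r) ≤ (k-1) + pv r :=
                tri2 hr0 (by omega) (by omega) (by omega) (by omega)
              rw [show r + (i-r) = i from by omega] at htri
              have hpvKir : pv (K - (i-r)) = pv (i-r) := pv_pow_sub (by omega) (by omega)
              have h1 : n - i = K*q' + (K - (i-r)) := by omega
              have hV : Vk k (n-i) = (k - pv (K - (i-r))) + pv (q'+1) := by
                rw [h1, Vk_eq k q' (K - (i-r)) (by omega) (by omega)]
              have ht : (2:ℤ)^(k - pv (i-r)) ∣ coeff (n-i) (T^(2^k)) :=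
                dvd_t_of_good (ih (n-i) (by omega)) (by omega)
              exact dvd_term hCg.dvd ht (by omega)
  · -- r = H
    subst hrH
    have hP2 : 2*n = K*(2*q+1) := by rw [hn, hKH]; ring
    have hVt : Vk k (2*n) = 0 := by rw [hP2]; exact Vk_mul k _
    rw [hVt]
    apply good_sum_single (i₀ := H) (Finset.mem_range.mpr (by omega))
    · have hch : (2^k).choose (2*H) = 1 := by
        rw [show 2*H = 2^k from by omega]
        exact Nat.choose_self _
      have hnr : n - H = K*q := by omega
      have ht : Good 0 (coeff (n-H) (T^(2^k))) := by
        rw [hnr]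
        have h2 := ih (K*q) (by omega)
        rwa [Vk_mul] at h2
      rw [hch]
      simpa using ht
    · intro i hi hine
      simp only [Finset.mem_range] at hi
      by_cases hiH : H < i
      · rw [Nat.choose_eq_zero_of_lt (by omega)]
        simp
      · rcases Nat.eq_zero_or_pos i with hi0 | hi0
        · subst hi0
          have hV : Vk k (n-0) = (k - pv H) + pv (q+1) := by
            rw [Nat.sub_zero, hn, Vk_eq k q H (by omega) (by omega)]
          have ht : (2:ℤ)^(0+1) ∣ coeff (n-0) (T^(2^k)) :=
            dvd_t_of_good (ih (n-0) (by omega)) (by rw [hV, hpvH]; omega)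
          simpa using ht
        · have hi' : i < H := by omega
          have hpvi2 : pv i + 2 ≤ k := pv_ne_pow hk hi0 (by omega) (by omega)
          have hCg := good_choose (k := k) (j := 2*i) (by omega) (by omega)
          rw [pv_double (by omega)] at hCg
          have ht : (2:ℤ)^0 ∣ coeff (n-i) (T^(2^k)) := by
            rw [pow_zero]
            exact one_dvd _
          exact dvd_term hCg.dvd ht (by omega)
  · -- H < r < K
    obtain ⟨t, rfl⟩ : ∃ t, r = H + t := ⟨r - H, by omega⟩
    have ht0 : 0 < t := by omega
    have htH : t < H := by omega
    have hpvt2 : pv t + 2 ≤ k := pv_ne_pow hk ht0 (by omega) (by omega)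
    have hpvr : pv (t + H) = pv t := pv_add_lt ht0 (by rw [hpvH]; omega)
    have hpv2t : pv (2*t) = pv t + 1 := pv_double (by omega)
    have hP2 : 2*n = K*(2*q+1) + 2*t := by rw [hn, hKH]; ring
    have hVt : Vk k (2*n) = (k - (pv t + 1)) + (1 + pv (q+1)) := by
      rw [hP2, Vk_eq k (2*q+1) (2*t) (by omega) (by omega), hpv2t,
        show 2*q+1+1 = 2*(q+1) from by ring, pv_double (by omega)]
      omega
    rw [hVt]
    have hE : (k - (pv t + 1)) + (1 + pv (q+1)) = (k - pv t) + pv (q+1) := by omega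
    apply good_sum_triple (i₀ := 0) (i₁ := t) (i₂ := H)
      (by omega) (by omega) (by omega)
      (Finset.mem_range.mpr (by omega)) (Finset.mem_range.mpr (by omega))
      (Finset.mem_range.mpr (by omega))
    · -- i = 0
      have hV : Vk k (n-0) = (k - pv (H + t)) + pv (q+1) := by
        rw [Nat.sub_zero, hn, Vk_eq k q (H+t) (by omega) (by omega)]
      have h2 := ih (n-0) (by omega)
      rw [hV, show H + t = t + H from by omega, hpvr, ← hE] at h2
      simpa using h2
    · -- i = t
      have hCg := good_choose (k := k) (j := 2*t) (by omega) (by omega)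
      rw [hpv2t] at hCg
      have hnt : n - t = K*q + H := by omega
      have ht2 : Good (1 + pv (q+1)) (coeff (n-t) (T^(2^k))) := by
        rw [hnt]
        have h2 := ih (K*q+H) (by omega)
        rwa [Vk_eq k q H (by omega) (by omega), hpvH, show k - (k-1) = 1 from by omega] at h2
      exact hCg.mul ht2
    · -- i = H
      have hch : (K).choose (2*H) = 1 := by
        rw [← hKH]
        exact Nat.choose_self K
      have hnH : n - H = K*q + t := by omega
      have ht2 : Good ((k - pv t) + pv (q+1)) (coeff (n-H) (T^(2^k))) := by
        rw [hnH]
        have h2 := ih (K*q+t) (by omega)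
        rwa [Vk_eq k q t (by omega) (by omega)] at h2
      rw [hKdef] at hch
      rw [hch, hE]
      simpa using ht2
    · intro i hi hine0 hinet hineH
      simp only [Finset.mem_range] at hi
      by_cases hiH : H < i
      · rw [Nat.choose_eq_zero_of_lt (by omega)]
        simp
      · have hi0 : 0 < i := by omega
        have hiH' : i < H := by omega
        have hpvi2 : pv i + 2 ≤ k := pv_ne_pow hk hi0 (by omega) (by omega)
        have hCg := good_choose (k := k) (j := 2*i) (by omega) (by omega)
        rw [pv_double (by omega)] at hCg
        rcases Nat.lt_or_ge i t with hlt | hge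
        · -- i < t : ρ = H + (t - i)
          have hti2 : pv (t-i) + 2 ≤ k := pv_ne_pow hk (by omega) (by omega) (by omega)
          have htri : pv i + pv (t-i) ≤ (k-2) + pv (i + (t-i)) :=
            tri1 hi0 (by omega) (by omega) (by omega)
          rw [show i + (t-i) = t from by omega] at htri
          have hpvρ : pv ((t-i) + H) = pv (t-i) := pv_add_lt (by omega) (by rw [hpvH]; omega)
          have h1 : n - i = K*q + ((t-i) + H) := by omega
          have hV : Vk k (n-i) = (k - pv ((t-i)+H)) + pv (q+1) := by
            rw [h1, Vk_eq k q ((t-i)+H) (by omega) (by omega)]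
          have ht2 : (2:ℤ)^((k - pv (t-i)) + pv (q+1)) ∣ coeff (n-i) (T^(2^k)) :=
            dvd_t_of_good (ih (n-i) (by omega)) (by omega)
          exact dvd_term hCg.dvd ht2 (by omega)
        · -- t < i < H : ρ = H - (i - t)
          have hgt : t < i := by omega
          have hit2 : pv (i-t) + 2 ≤ k := pv_ne_pow hk (by omega) (by omega) (by omega)
          have hi2 : pv (t + (i-t)) + 2 ≤ k := by
            rw [show t + (i-t) = i from by omega]
            exact hpvi2
          have htri : pv (t + (i-t)) + pv (i-t) ≤ (k-2) + pv t :=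
            tri2 ht0 (by omega) (by omega) (by omega) (by omega)
          rw [show t + (i-t) = i from by omega] at htri
          have hpvρ : pv (H - (i-t)) = pv (i-t) := by
            rw [hH]
            exact pv_pow_sub (by omega) (by omega)
          have h1 : n - i = K*q + (H - (i-t)) := by omega
          have hV : Vk k (n-i) = (k - pv (H - (i-t))) + pv (q+1) := by
            rw [h1, Vk_eq k q (H - (i-t)) (by omega) (by omega)]
          have ht2 : (2:ℤ)^((k - pv (i-t)) + pv (q+1)) ∣ coeff (n-i) (T^(2^k)) :=
            dvd_t_of_good (ih (n-i) (by omega)) (by omega)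
          exact dvd_term hCg.dvd ht2 (by omega)

lemma val_main (k n : ℕ) : Good (Vk k n) (coeff n (T^(2^k))) := by
  rcases Nat.eq_zero_or_pos k with hk | hk
  · subst hk
    have hV : Vk 0 n = 0 := by
      unfold Vk
      rw [if_pos (by simpa using one_dvd n)]
    rw [hV, pow_zero, pow_one, coeff_T]
    exact ⟨(-1)^(s2 n), Odd.pow ⟨-1, by ring⟩, by rw [pow_zero, one_mul]⟩
  · induction n using Nat.strong_induction_on with
    | _ n ihn =>
      rcases Nat.eq_zero_or_pos n with hn | hn
      · subst hn
        rw [Vk_zero, coeff_T_pow_zero]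
        exact good_one
      · rcases Nat.even_or_odd n with ⟨m, hm⟩ | ⟨m, hm⟩
        · have hm' : n = 2*m := by omega
          subst hm'
          exact even_step hk m (by omega) (fun m' hm' => ihn m' (by omega))
        · subst hm
          exact odd_step hk m (fun m' hm' => ihn m' (by omega))

lemma coeff_pow_two_pow_ne_zero (k n : ℕ) : coeff n (T^(2^k)) ≠ 0 :=
  (val_main k n).ne_zero

end MainInduction

end TM

theorem stmt11 :
    (∀ k n : ℕ, PowerSeries.coeff n (T ^ 2 ^ k) ≠ 0) ∧
    ∀ n : ℕ, PowerSeries.coeff n (T ^ 3) = 0 ↔ ∃ k : ℕ, 1 ≤ k ∧ a k = n := by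
  constructor
  · exact fun k n => TM.coeff_pow_two_pow_ne_zero k n
  · exact fun n => TM.d_zero_iff n
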